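/- Let E be a Banach lattice and let (E_i)_{i∈I} be a family of closed ideals in E such that E equals the norm closure of ⋃_i E_i. Then E has order continuous norm if and only if every E_i (as a Banach lattice with the induced norm and order) has order continuous norm. -/

import Mathlib

open Set Filter

/-- Let `E` be a Banach lattice and `(J i)` a family of closed ideals of
`E` whose union is norm dense. Then `E` has order continuous norm iff every `J i` (with the
induced norm and order) has order continuous norm. -/
theorem orderContinuous_iff_closed_ideals_orderContinuous
    {E : Type*} [NormedAddCommGroup E] [Lattice E] [HasSolidNorm E]
    [IsOrderedAddMonoid E] [NormedSpace ℝ E] [CompleteSpace E]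
    {ι : Type*} (J : ι → Submodule ℝ E)
    (hclosed : ∀ i, IsClosed (J i : Set E))
    (hideal : ∀ i, ∀ x y : E, y ∈ J i → |x| ≤ |y| → x ∈ J i)
    (hdense : closure (⋃ i, (J i : Set E)) = univ) :
    (∀ (x : ℕ → E) (b : E), Monotone x → (∀ n, x n ≤ b) →
        ∃ l : E, Tendsto x atTop (nhds l)) ↔
      ∀ i, ∀ (x : ℕ → E) (b : E), (∀ n, x n ∈ J i) → b ∈ J i → Monotone x →
        (∀ n, x n ≤ b) → ∃ l : E, Tendsto x atTop (nhds l) := by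
  constructor
  · intro h i x b _ _ hmono hbd
    exact h x b hmono hbd
  · intro h x b hmono hbd
    have hcc : CauchySeq x := by
      rw [Metric.cauchySeq_iff]
      intro ε hε
      have hmem : b - x 0 ∈ closure (⋃ i, (J i : Set E)) := by
        rw [hdense]; trivial
      obtain ⟨c, hc, hcε⟩ := Metric.mem_closure_iff.1 hmem (ε/4) (by linarith)
      obtain ⟨s, ⟨i, rfl⟩, hci⟩ := hc
      set d : E := |c| with hd
      have hdi : d ∈ J i := hideal i d c hci (by rw [hd, abs_abs])
      set y : ℕ → E := fun n => x n - x 0 with hy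
      have hy0 : ∀ n, 0 ≤ y n := fun n => sub_nonneg.2 (hmono (Nat.zero_le n))
      have hyb : ∀ n, y n ≤ b - x 0 := fun n => sub_le_sub_right (hbd n) _
      set z : ℕ → E := fun n => y n ⊓ d with hz
      have hz0 : ∀ n, 0 ≤ z n := fun n => le_inf (hy0 n) (abs_nonneg c)
      have hzd : ∀ n, z n ≤ d := fun n => inf_le_right
      have hzi : ∀ n, z n ∈ J i := fun n =>
        hideal i (z n) d hdi (by
          rw [abs_of_nonneg (hz0 n), abs_of_nonneg (abs_nonneg c)]
          exact hzd n)
      have hzmono : Monotone z := fun m n hmn =>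
        inf_le_inf_right d (sub_le_sub_right (hmono hmn) _)
      obtain ⟨l, hl⟩ := h i z d hzi hdi hzmono hzd
      have hzc : CauchySeq z := hl.cauchySeq
      have hbd' : ‖(b - x 0) - d‖ < ε/4 := by
        have h1 : |(b - x 0) - d| ≤ |(b - x 0) - c| := by
          have := abs_abs_sub_abs_le (b - x 0) c
          rwa [abs_of_nonneg (sub_nonneg.2 (hbd 0))] at this
        calc ‖(b - x 0) - d‖ ≤ ‖(b - x 0) - c‖ :=
              norm_le_norm_of_abs_le_abs h1
          _ < ε/4 := by rwa [dist_eq_norm] at hcε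
      have hkey : ∀ n, ‖y n - z n‖ ≤ ε/4 := by
        intro n
        have h1 : y n - z n = (y n - d) ⊔ 0 := by
          rw [hz]
          simp only
          rw [sub_inf, sub_self, sup_comm]
        have h2 : |y n - z n| ≤ |(b - x 0) - d| := by
          rw [h1, abs_of_nonneg le_sup_right]
          refine le_trans (sup_le_sup_right (sub_le_sub_right (hyb n) d) 0) ?_
          exact sup_le (le_abs_self _) (abs_nonneg _)
        exact le_trans (norm_le_norm_of_abs_le_abs h2) hbd'.le
      obtain ⟨N, hN⟩ := Metric.cauchySeq_iff.1 hzc (ε/4) (by linarith)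
      refine ⟨N, fun m hm n hn => ?_⟩
      have hxy : x m - x n = (y m - z m) + (z m - z n) + (z n - y n) := by
        simp only [hy, hz]
        abel
      calc dist (x m) (x n) = ‖(y m - z m) + (z m - z n) + (z n - y n)‖ := by
            rw [dist_eq_norm, hxy]
        _ ≤ ‖y m - z m‖ + ‖z m - z n‖ + ‖z n - y n‖ :=
            le_trans (norm_add_le _ _) (add_le_add_left (norm_add_le _ _) _)
        _ < ε/4 + ε/4 + ε/4 := by
            have h1 := hkey m
            have h2 := hN m hm n hn
            rw [dist_eq_norm] at h2
            have h3 : ‖z n - y n‖ = ‖y n - z n‖ := norm_sub_rev _ _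
            have h4 := hkey n
            linarith [h3 ▸ h4]
        _ < ε := by linarith
    exact cauchySeq_tendsto_of_complete hcc
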